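/- In any graph G with projection gap γ and fixed vertex s, for every subpath Q_j of length γ of a shortest path starting in s, and every vertex x, either d(x, Q_j) = d(x, I(s,Q_j)) or d(x, Q_j) = d(x, R_s(Q_j)). -/

import Mathlib

open SimpleGraph

variable {V : Type*}

/-- Distance from a vertex to a set of vertices. -/
noncomputable def setDist (G : SimpleGraph V) (x : V) (S : Set V) : ℕ :=
  sInf (G.dist x '' S)

/-- Eccentricity of a set of vertices. -/
noncomputable def eccSet (G : SimpleGraph V) [Fintype V] (S : Set V) : ℕ :=
  Finset.univ.sup fun v => setDist G v S

/-- Eccentricity of a vertex. -/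
noncomputable def eccV (G : SimpleGraph V) [Fintype V] (v : V) : ℕ :=
  Finset.univ.sup fun u => G.dist v u

/-- Diameter of a graph. -/
noncomputable def diamG (G : SimpleGraph V) [Fintype V] : ℕ :=
  Finset.univ.sup fun v => eccV G v

/-- Projection of a vertex onto a set. -/
def proj (G : SimpleGraph V) (x : V) (S : Set V) : Set V :=
  {u ∈ S | G.dist x u = setDist G x S}

/-- The interval between two vertices. -/
def interval (G : SimpleGraph V) (a b : V) : Set V :=
  {w | G.dist a b = G.dist a w + G.dist w b}

/-- Distance-hereditary: distances in connected induced subgraphs equal distances in `G`. -/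
def DistHereditary (G : SimpleGraph V) : Prop :=
  ∀ S : Set V, (G.induce S).Connected →
    ∀ u v : S, (G.induce S).dist u v = G.dist u.1 v.1

/-- A walk is a shortest path. -/
def IsShortestPath (G : SimpleGraph V) {a b : V} (p : G.Walk a b) : Prop :=
  p.IsPath ∧ p.length = G.dist a b

/-- `pg(G) ≤ γ`: for every shortest path `P` starting at `s`, every vertex `x`, and any two
vertices `u, w` of the projection of `x` on `P` with `d(u,w) > γ+1`, some vertex of the
projection lies strictly between them on `P` (positions on `P` equal distances from `s`). -/
def ProjGapLE (G : SimpleGraph V) (γ : ℕ) : Prop :=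
  ∀ (s t : V) (p : G.Walk s t), IsShortestPath G p →
    ∀ (x u w : V), u ∈ proj G x {v | v ∈ p.support} → w ∈ proj G x {v | v ∈ p.support} →
      G.dist s u < G.dist s w → γ + 1 < G.dist u w →
      ∃ z ∈ proj G x {v | v ∈ p.support},
        G.dist s u < G.dist s z ∧ G.dist s z < G.dist s w

/-- `R_s(Q)`: vertices `w` such that some shortest path from `s` to `w` contains all of `Q`,
together with `Q` itself. -/
def Rset (G : SimpleGraph V) (s : V) (Q : Set V) : Set V :=
  {w | Q ⊆ interval G s w} ∪ Q


section Aux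

variable {G : SimpleGraph V}

private lemma aux_dist_getVert_le (hconn : G.Connected) {a b : V} (r : G.Walk a b) :
    ∀ i : ℕ, G.dist a (r.getVert i) ≤ i := by
  induction r with
  | nil => intro i; simp [SimpleGraph.Walk.getVert, SimpleGraph.dist_self]
  | @cons u u' v h q ih =>
    intro i
    cases i with
    | zero => simp [SimpleGraph.Walk.getVert, SimpleGraph.dist_self]
    | succ n =>
      rw [SimpleGraph.Walk.getVert_cons_succ]
      have h1 : G.dist u u' ≤ 1 := by
        have := SimpleGraph.dist_le (SimpleGraph.Walk.cons h SimpleGraph.Walk.nil)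
        simpa using this
      have h2 := hconn.dist_triangle (u := u) (v := u') (w := q.getVert n)
      have h3 := ih n
      omega

private lemma aux_dist_getVert_right (hconn : G.Connected) {a b : V} (r : G.Walk a b) :
    ∀ i : ℕ, G.dist (r.getVert i) b ≤ r.length - i := by
  induction r with
  | nil => intro i; simp [SimpleGraph.Walk.getVert, SimpleGraph.dist_self]
  | @cons u u' v h q ih =>
    intro i
    cases i with
    | zero =>
      have := SimpleGraph.dist_le (SimpleGraph.Walk.cons h q)
      simpa [SimpleGraph.Walk.getVert] using this
    | succ n =>
      rw [SimpleGraph.Walk.getVert_cons_succ]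
      have h3 := ih n
      have : (SimpleGraph.Walk.cons h q).length = q.length + 1 := by simp
      omega

private lemma aux_getVert_dist (hconn : G.Connected) {a b : V} (r : G.Walk a b)
    (hr : r.length = G.dist a b) {i : ℕ} (hi : i ≤ r.length) :
    G.dist a (r.getVert i) = i ∧ G.dist (r.getVert i) b = r.length - i := by
  have h1 := aux_dist_getVert_le hconn r i
  have h2 := aux_dist_getVert_right hconn r i
  have h3 := hconn.dist_triangle (u := a) (v := r.getVert i) (w := b)
  omega

private lemma aux_exists_subwalk {a b : V} (r : G.Walk a b) (m : ℕ) :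
    ∀ n, m ≤ n → n ≤ r.length →
      ∃ q : G.Walk (r.getVert m) (r.getVert n), q.length = n - m ∧
        ∀ v ∈ q.support, ∃ i, m ≤ i ∧ i ≤ n ∧ r.getVert i = v := by
  intro n hmn
  induction n, hmn using Nat.le_induction with
  | base =>
    intro _
    refine ⟨SimpleGraph.Walk.nil, by simp, ?_⟩
    intro v hv
    simp only [SimpleGraph.Walk.support_nil, List.mem_singleton] at hv
    exact ⟨m, le_refl m, le_refl m, hv.symm⟩
  | succ n hmn ih =>
    intro hn1
    obtain ⟨q, hql, hqs⟩ := ih (by omega)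
    have hadj := r.adj_getVert_succ (show n < r.length by omega)
    refine ⟨q.concat hadj, ?_, ?_⟩
    · rw [SimpleGraph.Walk.length_concat, hql]; omega
    · intro v hv
      rw [SimpleGraph.Walk.support_concat, List.mem_append] at hv
      rcases hv with hv | hv
      · obtain ⟨i, hi1, hi2, hi3⟩ := hqs v hv
        exact ⟨i, hi1, by omega, hi3⟩
      · simp only [List.mem_singleton] at hv
        exact ⟨n + 1, by omega, le_refl _, hv.symm⟩

end Aux

theorem stmt_10 {V : Type*} [Fintype V] (G : SimpleGraph V) (hconn : G.Connected)
    (γ : ℕ) (hγ : ProjGapLE G γ) (s t : V) (p : G.Walk s t) (hp : IsShortestPath G p)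
    (j : ℕ) (hjγ : j + γ ≤ p.length) (Qj : Set V)
    (hQj : Qj = {v | v ∈ p.support ∧ j ≤ G.dist s v ∧ G.dist s v ≤ j + γ})
    (vj : V) (hvj : vj ∈ Qj) (hvjd : G.dist s vj = j) :
    ∀ x : V, setDist G x Qj = setDist G x (interval G s vj ∪ Qj) ∨
      setDist G x Qj = setDist G x (Rset G s Qj) := by
  classical
  obtain ⟨hpPath, hpLen⟩ := hp
  intro x
  by_contra hcon
  push_neg at hcon
  obtain ⟨hI, hR⟩ := hcon
  -- basic facts about setDist on Qj
  have hvjQ : vj ∈ Qj := hvj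
  have hQne : (G.dist x '' Qj).Nonempty := ⟨_, vj, hvjQ, rfl⟩
  have hQmem : ∀ q ∈ Qj, setDist G x Qj ≤ G.dist x q := fun q hq => Nat.sInf_le ⟨q, hq, rfl⟩
  -- the union sets are at most dQ
  obtain ⟨q0, hq0Q, hq0d⟩ := Nat.sInf_mem hQne
  have hq0d' : G.dist x q0 = setDist G x Qj := hq0d
  have hIle : setDist G x (interval G s vj ∪ Qj) ≤ setDist G x Qj := by
    have : setDist G x (interval G s vj ∪ Qj) ≤ G.dist x q0 := Nat.sInf_le ⟨q0, Or.inr hq0Q, rfl⟩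
    omega
  have hRle : setDist G x (Rset G s Qj) ≤ setDist G x Qj := by
    have : setDist G x (Rset G s Qj) ≤ G.dist x q0 := Nat.sInf_le ⟨q0, Or.inr hq0Q, rfl⟩
    omega
  have hIlt : setDist G x (interval G s vj ∪ Qj) < setDist G x Qj := lt_of_le_of_ne hIle (Ne.symm hI)
  have hRlt : setDist G x (Rset G s Qj) < setDist G x Qj := lt_of_le_of_ne hRle (Ne.symm hR)
  -- choose closest vertices y and w
  obtain ⟨y, hyIQ, hyd⟩ := Nat.sInf_mem (⟨_, vj, Or.inr hvjQ, rfl⟩ :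
    (G.dist x '' (interval G s vj ∪ Qj)).Nonempty)
  obtain ⟨w, hwRQ, hwd⟩ := Nat.sInf_mem (⟨_, vj, Or.inr hvjQ, rfl⟩ :
    (G.dist x '' (Rset G s Qj)).Nonempty)
  have hyd' : G.dist x y = setDist G x (interval G s vj ∪ Qj) := hyd
  have hwd' : G.dist x w = setDist G x (Rset G s Qj) := hwd
  have hyQ : y ∉ Qj := fun h => by have := hQmem y h; omega
  have hwQ : w ∉ Qj := fun h => by have := hQmem w h; omega
  have hyI : G.dist s vj = G.dist s y + G.dist y vj := by
    rcases hyIQ with h | h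
    · exact h
    · exact absurd h hyQ
  have hwR : Qj ⊆ interval G s w := by
    rcases hwRQ with h | h
    · exact h
    · exact absurd h hwQ
  set M := setDist G x Qj - 1 with hM
  have hdQpos : 1 ≤ setDist G x Qj := by omega
  have hyM : G.dist x y ≤ M := by omega
  have hwM : G.dist x w ≤ M := by omega
  have hQM : ∀ q ∈ Qj, M < G.dist x q := fun q hq => by have := hQmem q hq; omega
  -- facts about p
  set qe := p.getVert (j + γ) with hqe
  have hqed : G.dist s qe = j + γ := (aux_getVert_dist hconn p hpLen hjγ).1
  have hqesup : qe ∈ p.support :=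
    SimpleGraph.Walk.mem_support_iff_exists_getVert.mpr ⟨j + γ, rfl, hjγ⟩
  have hqeQ : qe ∈ Qj := by rw [hQj]; exact ⟨hqesup, by omega, by omega⟩
  have hvjp : p.getVert j = vj := by
    have hvjsup : vj ∈ p.support := by rw [hQj] at hvjQ; exact hvjQ.1
    obtain ⟨i, hgi, hile⟩ := SimpleGraph.Walk.mem_support_iff_exists_getVert.mp hvjsup
    have : G.dist s (p.getVert i) = i := (aux_getVert_dist hconn p hpLen hile).1
    rw [hgi, hvjd] at this
    rw [this]; exact hgi
  -- left walk
  obtain ⟨W1, hW1⟩ := hconn.exists_walk_length_eq_dist s y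
  obtain ⟨W2, hW2⟩ := hconn.exists_walk_length_eq_dist y vj
  set Wl := W1.append W2 with hWl
  have hWlLen : Wl.length = j := by
    rw [hWl, SimpleGraph.Walk.length_append, hW1, hW2]; omega
  have hWlshort : Wl.length = G.dist s vj := by rw [hWlLen, hvjd]
  have hysup : y ∈ Wl.support :=
    (SimpleGraph.Walk.mem_support_append_iff _ _).mpr (Or.inl W1.end_mem_support)
  obtain ⟨iy, hiyv, hiyle⟩ := SimpleGraph.Walk.mem_support_iff_exists_getVert.mp hysup
  have hWlj : Wl.getVert j = vj := by rw [← hWlLen]; exact Wl.getVert_length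
  have hiylt : iy < j := by
    rcases Nat.lt_or_ge iy j with h | h
    · exact h
    · exfalso
      have hij : iy = j := by omega
      rw [hij, hWlj] at hiyv
      have := hQM vj hvjQ
      rw [← hiyv] at hyM
      omega
  -- findGreatest on the left walk
  set Pl : ℕ → Prop := fun i => G.dist x (Wl.getVert i) ≤ M with hPl
  have hPliy : Pl iy := by show G.dist x (Wl.getVert iy) ≤ M; rw [hiyv]; omega
  set cidx := Nat.findGreatest Pl (j - 1) with hcidx
  have hPc : Pl cidx := Nat.findGreatest_spec (by omega : iy ≤ j - 1) hPliy
  have hcle : cidx ≤ j - 1 := Nat.findGreatest_le _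
  have hmax : ∀ k, cidx < k → k ≤ j - 1 → ¬ Pl k := fun k h1 h2 =>
    Nat.findGreatest_is_greatest h1 h2
  have hsuccM : M < G.dist x (Wl.getVert (cidx + 1)) := by
    by_cases h : cidx + 1 ≤ j - 1
    · have h2 : ¬ (G.dist x (Wl.getVert (cidx + 1)) ≤ M) := hmax (cidx + 1) (by omega) h
      omega
    · have : cidx + 1 = j := by omega
      rw [this, hWlj]
      exact hQM vj hvjQ
  have hadjl : G.Adj (Wl.getVert cidx) (Wl.getVert (cidx + 1)) :=
    Wl.adj_getVert_succ (by omega)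
  have hstepl : G.dist x (Wl.getVert (cidx + 1)) ≤ G.dist x (Wl.getVert cidx) + 1 := by
    have h1 : G.dist (Wl.getVert cidx) (Wl.getVert (cidx + 1)) ≤ 1 := by
      have := SimpleGraph.dist_le (SimpleGraph.Walk.cons hadjl SimpleGraph.Walk.nil)
      simpa using this
    have h2 := hconn.dist_triangle (u := x) (v := Wl.getVert cidx) (w := Wl.getVert (cidx + 1))
    omega
  have hPcval : G.dist x (Wl.getVert cidx) ≤ M := hPc
  have hcM : G.dist x (Wl.getVert cidx) = M := by omega
  set c := Wl.getVert cidx with hc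
  have hsc : G.dist s c = cidx := (aux_getVert_dist hconn Wl hWlshort (by omega)).1
  -- right walk
  obtain ⟨Wr, hWr⟩ := hconn.exists_walk_length_eq_dist qe w
  have hsw : G.dist s w = (j + γ) + G.dist qe w := by
    have := hwR hqeQ
    rw [interval] at this
    rw [Set.mem_setOf_eq] at this
    rw [this, hqed]
  set Pr : ℕ → Prop := fun i => G.dist x (Wr.getVert i) ≤ M with hPr
  have hex : ∃ i, Pr i := ⟨Wr.length, by show G.dist x (Wr.getVert Wr.length) ≤ M; rw [Wr.getVert_length]; omega⟩
  set i2 := Nat.find hex with hi2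
  have hPri2 : Pr i2 := Nat.find_spec hex
  have hmin : ∀ k, k < i2 → ¬ Pr k := fun k hk => Nat.find_min hex hk
  have hi2le : i2 ≤ Wr.length := Nat.find_min' hex (by
    show G.dist x (Wr.getVert Wr.length) ≤ M; rw [Wr.getVert_length]; omega)
  have hi2pos : 0 < i2 := by
    rcases Nat.eq_zero_or_pos i2 with h | h
    · exfalso
      have h2 : G.dist x (Wr.getVert i2) ≤ M := hPri2
      rw [h, Wr.getVert_zero] at h2
      have := hQM qe hqeQ
      omega
    · exact h
  have hprev : ¬ Pr (i2 - 1) := hmin _ (by omega)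
  have hadjr : G.Adj (Wr.getVert (i2 - 1)) (Wr.getVert i2) := by
    have h12 : i2 - 1 + 1 = i2 := by omega
    have := Wr.adj_getVert_succ (show i2 - 1 < Wr.length by omega)
    rwa [h12] at this
  have hstepr : G.dist x (Wr.getVert (i2 - 1)) ≤ G.dist x (Wr.getVert i2) + 1 := by
    have h1 : G.dist (Wr.getVert (i2 - 1)) (Wr.getVert i2) ≤ 1 := by
      have := SimpleGraph.dist_le (SimpleGraph.Walk.cons hadjr SimpleGraph.Walk.nil)
      simpa using this
    have h2 := hconn.dist_triangle (u := x) (v := Wr.getVert (i2 - 1)) (w := Wr.getVert i2)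
    have h3 := hconn.dist_triangle (u := x) (v := Wr.getVert i2) (w := Wr.getVert (i2 - 1))
    have h4 : G.dist (Wr.getVert i2) (Wr.getVert (i2 - 1)) ≤ 1 := by
      rwa [SimpleGraph.dist_comm]
    omega
  have hprev' : M < G.dist x (Wr.getVert (i2 - 1)) := by
    have h2 : ¬ (G.dist x (Wr.getVert (i2 - 1)) ≤ M) := hprev
    omega
  have hPri2val : G.dist x (Wr.getVert i2) ≤ M := hPri2
  have hc2M : G.dist x (Wr.getVert i2) = M := by omega
  set c2 := Wr.getVert i2 with hc2
  have hqec2 : G.dist qe c2 = i2 := (aux_getVert_dist hconn Wr hWr hi2le).1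
  have hc2w : G.dist c2 w = Wr.length - i2 := (aux_getVert_dist hconn Wr hWr hi2le).2
  have hsc2 : G.dist s c2 = j + γ + i2 := by
    have hle1 : G.dist s c2 ≤ j + γ + i2 := by
      have := hconn.dist_triangle (u := s) (v := qe) (w := c2)
      omega
    have hle2 : j + γ + i2 ≤ G.dist s c2 := by
      have h1 := hconn.dist_triangle (u := s) (v := c2) (w := w)
      rw [hWr] at hi2le hc2w
      omega
    omega
  -- subwalks
  obtain ⟨Q1, hQ1len, hQ1sup⟩ := aux_exists_subwalk Wl cidx j (by omega) (by omega)
  obtain ⟨Q2, hQ2len, hQ2sup⟩ := aux_exists_subwalk p j (j + γ) (by omega) hjγ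
  obtain ⟨Q3, hQ3len, hQ3sup⟩ := aux_exists_subwalk Wr 0 i2 (Nat.zero_le _) hi2le
  have e4 : Wr.getVert 0 = qe := Wr.getVert_zero
  set P5 : G.Walk c c2 :=
    (Q1.copy rfl hWlj).append ((Q2.copy hvjp rfl).append (Q3.copy e4 rfl)) with hP5
  have hP5len : P5.length = (j - cidx) + (γ + i2) := by
    rw [hP5]
    simp only [SimpleGraph.Walk.length_append, SimpleGraph.Walk.length_copy,
      hQ1len, hQ2len, hQ3len]
    omega
  have hdge : j + γ + i2 - cidx ≤ G.dist c c2 := by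
    have := hconn.dist_triangle (u := s) (v := c) (w := c2)
    omega
  have hdcc2 : G.dist c c2 = P5.length := by
    have h1 := SimpleGraph.dist_le P5
    omega
  have hgap : γ + 1 < G.dist c c2 := by omega
  -- the key support lemma
  have hsupval : ∀ v ∈ P5.support, G.dist x v ≤ M → v = c ∨ v = c2 := by
    intro v hv hvM
    rw [hP5] at hv
    rw [SimpleGraph.Walk.mem_support_append_iff] at hv
    rcases hv with hv | hv
    · rw [SimpleGraph.Walk.support_copy] at hv
      obtain ⟨i, hi1, hi2', hi3⟩ := hQ1sup v hv
      rcases Nat.eq_or_lt_of_le hi1 with h | h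
      · left; rw [← hi3, ← h]
      · exfalso
        rcases Nat.lt_or_ge i j with h2 | h2
        · have h3 : ¬ (G.dist x (Wl.getVert i) ≤ M) := hmax i h (by omega)
          rw [hi3] at h3
          omega
        · have : i = j := by omega
          rw [this, hWlj] at hi3
          have := hQM vj hvjQ
          rw [hi3] at this
          omega
    · rw [SimpleGraph.Walk.mem_support_append_iff] at hv
      rcases hv with hv | hv
      · rw [SimpleGraph.Walk.support_copy] at hv
        obtain ⟨i, hi1, hi2', hi3⟩ := hQ2sup v hv
        exfalso
        have hvsup : v ∈ p.support :=
          SimpleGraph.Walk.mem_support_iff_exists_getVert.mpr ⟨i, hi3, by omega⟩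
        have hdsv : G.dist s v = i := by
          rw [← hi3]; exact (aux_getVert_dist hconn p hpLen (by omega : i ≤ p.length)).1
        have hvQ : v ∈ Qj := by rw [hQj]; exact ⟨hvsup, by omega, by omega⟩
        have := hQM v hvQ
        omega
      · rw [SimpleGraph.Walk.support_copy] at hv
        obtain ⟨i, _, hi2', hi3⟩ := hQ3sup v hv
        rcases Nat.eq_or_lt_of_le hi2' with h | h
        · right; rw [← hi3, h]
        · exfalso
          have h3 : ¬ (G.dist x (Wr.getVert i) ≤ M) := hmin i h
          rw [hi3] at h3
          omega
  -- the bypass path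
  set Pb := P5.bypass with hPb
  have hPbsub : Pb.support ⊆ P5.support := P5.support_bypass_subset
  have hPblen : Pb.length = G.dist c c2 := by
    have h1 : Pb.length ≤ P5.length := P5.length_bypass_le
    have h2 := SimpleGraph.dist_le Pb
    omega
  have hPbshort : IsShortestPath G Pb := ⟨P5.bypass_isPath, hPblen⟩
  have hcPb : c ∈ Pb.support := Pb.start_mem_support
  have hc2Pb : c2 ∈ Pb.support := Pb.end_mem_support
  have hsdPb : setDist G x {v | v ∈ Pb.support} = M := by
    apply le_antisymm
    · exact Nat.sInf_le ⟨c, hcPb, hcM⟩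
    · show M ≤ sInf (G.dist x '' {v | v ∈ Pb.support})
      have hne2 : (G.dist x '' {v | v ∈ Pb.support}).Nonempty := ⟨G.dist x c, ⟨c, hcPb, rfl⟩⟩
      apply le_csInf hne2
      rintro b ⟨v, hv, rfl⟩
      by_contra hlt
      push_neg at hlt
      have hvv : G.dist x v ≤ M := by omega
      rcases hsupval v (hPbsub hv) hvv with h | h
      · rw [h, hcM] at hlt; omega
      · rw [h, hc2M] at hlt; omega
  have hcproj : c ∈ proj G x {v | v ∈ Pb.support} := ⟨hcPb, by rw [hsdPb]; exact hcM⟩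
  have hc2proj : c2 ∈ proj G x {v | v ∈ Pb.support} := ⟨hc2Pb, by rw [hsdPb]; exact hc2M⟩
  obtain ⟨z, hzproj, hz1, hz2⟩ := hγ c c2 Pb hPbshort x c c2 hcproj hc2proj
    (by rw [SimpleGraph.dist_self]; omega) hgap
  obtain ⟨hzsup, hzd⟩ := hzproj
  have hzM : G.dist x z ≤ M := by rw [hzd, hsdPb]
  rcases hsupval z (hPbsub hzsup) hzM with h | h
  · rw [h, SimpleGraph.dist_self] at hz1; omega
  · rw [h] at hz2; omega
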